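/- For all ordinals α and ρ and every finite set Δ of closed pseudo-Π¹₁ formulas: if ⊢^α_{ρ+1} Δ, then ⊢^{ω^α}_ρ Δ. (Cut-elimination: one exponential in the height reduces the cut rank by one.) -/

import Mathlib

universe u

open Ordinal

/-- Terms of first-order arithmetic in the signature `(0, 1, +, ×)`, with (at most) `n`
free variables, in de Bruijn representation. -/
inductive PTerm : ℕ → Type
  | var {n} : Fin n → PTerm n
  | zero {n} : PTerm n
  | one {n} : PTerm n
  | add {n} : PTerm n → PTerm n → PTerm n
  | mul {n} : PTerm n → PTerm n → PTerm n
  deriving DecidableEq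

/-- Pseudo-Π¹₁ formulas (with at most `n` free number variables) in negation normal form:
built from literals of the signature `(0,1,+,×,=)` and the atomic formulas `t ∈ X`, `t ∉ X`
for the single fixed set variable `X`, by `∧`, `∨`, `∀x`, `∃x` (de Bruijn representation). -/
inductive PForm : ℕ → Type
  | eq {n} : PTerm n → PTerm n → PForm n
  | ne {n} : PTerm n → PTerm n → PForm n
  | mem {n} : PTerm n → PForm n
  | nmem {n} : PTerm n → PForm n
  | and {n} : PForm n → PForm n → PForm n
  | or {n} : PForm n → PForm n → PForm n
  | all {n} : PForm (n + 1) → PForm n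
  | ex {n} : PForm (n + 1) → PForm n
  deriving DecidableEq

namespace PTerm

/-- Evaluation of a term in the standard model `ℕ` under the environment `e`. -/
def val {n} (e : Fin n → ℕ) : PTerm n → ℕ
  | var i => e i
  | zero => 0
  | one => 1
  | add s t => s.val e + t.val e
  | mul s t => s.val e * t.val e

/-- The value of a closed term in the standard model. -/
def val0 (t : PTerm 0) : ℕ := t.val Fin.elim0

/-- Simultaneous substitution in terms. -/
def subst {m n} (σ : Fin m → PTerm n) : PTerm m → PTerm n
  | var i => σ i
  | zero => zero
  | one => one
  | add s t => add (s.subst σ) (t.subst σ)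
  | mul s t => mul (s.subst σ) (t.subst σ)

/-- Shift all free variables up by one. -/
def shift {n} (t : PTerm n) : PTerm (n + 1) := t.subst fun i => var i.succ

/-- The numeral `k̄` denoting the natural number `k`. -/
def numeral {n} : ℕ → PTerm n
  | 0 => zero
  | k + 1 => add (numeral k) one

end PTerm

namespace PForm

/-- Negation, defined by De Morgan duality. -/
def neg {n} : PForm n → PForm n
  | eq s t => ne s t
  | ne s t => eq s t
  | mem t => nmem t
  | nmem t => mem t
  | and A B => or A.neg B.neg
  | or A B => and A.neg B.neg
  | all A => ex A.neg
  | ex A => all A.neg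

/-- The rank of a formula: the number of logical symbols occurring in it. -/
def rk {n} : PForm n → ℕ
  | eq _ _ => 0
  | ne _ _ => 0
  | mem _ => 0
  | nmem _ => 0
  | and A B => A.rk + B.rk + 1
  | or A B => A.rk + B.rk + 1
  | all A => A.rk + 1
  | ex A => A.rk + 1

/-- Lift a substitution under a binder. -/
def liftSubst {m n} (σ : Fin m → PTerm n) : Fin (m + 1) → PTerm (n + 1) :=
  Fin.cases (PTerm.var 0) fun i => (σ i).shift

/-- Simultaneous substitution in formulas. -/
def subst : {m n : ℕ} → (Fin m → PTerm n) → PForm m → PForm n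
  | _, _, σ, eq s t => eq (s.subst σ) (t.subst σ)
  | _, _, σ, ne s t => ne (s.subst σ) (t.subst σ)
  | _, _, σ, mem t => mem (t.subst σ)
  | _, _, σ, nmem t => nmem (t.subst σ)
  | _, _, σ, and A B => and (A.subst σ) (B.subst σ)
  | _, _, σ, or A B => or (A.subst σ) (B.subst σ)
  | _, _, σ, all A => all (A.subst (liftSubst σ))
  | _, _, σ, ex A => ex (A.subst (liftSubst σ))

/-- `A.inst k` is `A(k̄)`: the result of substituting the numeral `k̄` for the free
variable of `A`. -/
def inst (A : PForm 1) (k : ℕ) : PForm 0 := A.subst fun _ => PTerm.numeral k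

/-- Truth of a pseudo-Π¹₁ formula in the standard model `ℕ`, with the set variable `X`
interpreted as `S` and the environment `e`. -/
def Sat (S : Set ℕ) : {n : ℕ} → (Fin n → ℕ) → PForm n → Prop
  | _, e, eq s t => s.val e = t.val e
  | _, e, ne s t => s.val e ≠ t.val e
  | _, e, mem t => t.val e ∈ S
  | _, e, nmem t => t.val e ∉ S
  | _, e, and A B => A.Sat S e ∧ B.Sat S e
  | _, e, or A B => A.Sat S e ∨ B.Sat S e
  | _, e, all A => ∀ k : ℕ, A.Sat S (Fin.cons k e)
  | _, e, ex A => ∃ k : ℕ, A.Sat S (Fin.cons k e)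

end PForm

/-- The infinitary (ω-logic) derivability relation `⊢^α_ρ Δ` for finite sets `Δ` of closed
pseudo-Π¹₁ formulas: derivations of height `α` with all cut formulas of rank `< ρ`. -/
inductive Der : Ordinal.{u} → Ordinal.{u} → Finset (PForm 0) → Prop
  /-- (Ax): `Δ` contains a true closed literal of the first-order signature, or contains
  `s ∉ X` and `t ∈ X` for closed terms `s, t` with the same value. -/
  | ax {α ρ Δ} :
      ((∃ s t : PTerm 0, (PForm.eq s t ∈ Δ ∧ s.val0 = t.val0) ∨
          (PForm.ne s t ∈ Δ ∧ s.val0 ≠ t.val0)) ∨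
        (∃ s t : PTerm 0, PForm.nmem s ∈ Δ ∧ PForm.mem t ∈ Δ ∧ s.val0 = t.val0)) →
      Der α ρ Δ
  /-- (∧) -/
  | and {α α₁ α₂ ρ Δ} {A₁ A₂ : PForm 0} : Der α₁ ρ (insert A₁ Δ) → Der α₂ ρ (insert A₂ Δ) →
      α₁ < α → α₂ < α → Der α ρ (insert (PForm.and A₁ A₂) Δ)
  /-- (∨), left disjunct -/
  | orl {α α₀ ρ Δ} {A₁ A₂ : PForm 0} : Der α₀ ρ (insert A₁ Δ) → α₀ < α →
      Der α ρ (insert (PForm.or A₁ A₂) Δ)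
  /-- (∨), right disjunct -/
  | orr {α α₀ ρ Δ} {A₁ A₂ : PForm 0} : Der α₀ ρ (insert A₂ Δ) → α₀ < α →
      Der α ρ (insert (PForm.or A₁ A₂) Δ)
  /-- (ω) -/
  | all {α ρ Δ} {A : PForm 1} (β : ℕ → Ordinal.{u}) : (∀ k : ℕ, β k < α) →
      (∀ k : ℕ, Der (β k) ρ (insert (A.inst k) Δ)) → Der α ρ (insert (PForm.all A) Δ)
  /-- (∃) -/
  | ex {α α₀ ρ Δ} {A : PForm 1} (k : ℕ) : Der α₀ ρ (insert (A.inst k) Δ) → α₀ < α →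
      Der α ρ (insert (PForm.ex A) Δ)
  /-- (Cut) -/
  | cut {α α₁ α₂ ρ Δ} {F : PForm 0} : Der α₁ ρ (insert F Δ) → Der α₂ ρ (insert F.neg Δ) →
      α₁ < α → α₂ < α → (F.rk : Ordinal) < ρ → Der α ρ Δ


namespace PForm

@[simp] lemma neg_neg {n} (A : PForm n) : A.neg.neg = A := by
  induction A <;> simp [neg, *]

@[simp] lemma rk_neg {n} (A : PForm n) : A.neg.rk = A.rk := by
  induction A <;> simp [neg, rk, *]

lemma rk_subst {m} (A : PForm m) : ∀ {n} (σ : Fin m → PTerm n), (A.subst σ).rk = A.rk := by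
  induction A <;> intro n σ <;> simp [subst, rk, *]

lemma neg_subst {m} (A : PForm m) :
    ∀ {n} (σ : Fin m → PTerm n), (A.subst σ).neg = A.neg.subst σ := by
  induction A <;> intro n σ <;> simp [subst, neg, *]

lemma rk_inst (A : PForm 1) (k : ℕ) : (A.inst k).rk = A.rk := rk_subst A _

lemma neg_inst (A : PForm 1) (k : ℕ) : (A.inst k).neg = A.neg.inst k := neg_subst A _

end PForm

section Helpers

variable {c P Q : PForm 0} {Δ Θ : Finset (PForm 0)}

lemma cond_tail (h : ∀ B ∈ insert P Δ, B = c ∨ B ∈ Θ) : ∀ B ∈ Δ, B = c ∨ B ∈ Θ :=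
  fun B hB => h B (Finset.mem_insert_of_mem hB)

lemma cond_weak (h : ∀ B ∈ Δ, B = c ∨ B ∈ Θ) : ∀ B ∈ Δ, B = c ∨ B ∈ insert Q Θ :=
  fun B hB => (h B hB).imp_right Finset.mem_insert_of_mem

lemma cond_step (h : ∀ B ∈ Δ, B = c ∨ B ∈ Θ) :
    ∀ B ∈ insert Q Δ, B = c ∨ B ∈ insert Q Θ := by
  intro B hB
  rcases Finset.mem_insert.mp hB with rfl | hB
  · exact Or.inr (Finset.mem_insert_self _ _)
  · exact (h B hB).imp_right Finset.mem_insert_of_mem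

lemma cond_absorb (h : ∀ B ∈ Δ, B = c ∨ B ∈ Θ) (hQ : Q ∈ Θ) :
    ∀ B ∈ insert Q Δ, B = c ∨ B ∈ Θ := by
  intro B hB
  rcases Finset.mem_insert.mp hB with rfl | hB
  · exact Or.inr hQ
  · exact h B hB

lemma mem_step (h : ∀ B ∈ Δ, B ∈ Θ) : ∀ B ∈ insert Q Δ, B ∈ insert Q Θ := by
  intro B hB
  rcases Finset.mem_insert.mp hB with rfl | hB
  · exact Finset.mem_insert_self _ _
  · exact Finset.mem_insert_of_mem (h B hB)

lemma cond_insert : ∀ B ∈ insert c Δ, B = c ∨ B ∈ Δ := fun _ hB => Finset.mem_insert.mp hB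

end Helpers

/-- The axiom condition of `Der.ax`. -/
def AxCond (Δ : Finset (PForm 0)) : Prop :=
  (∃ s t : PTerm 0, (PForm.eq s t ∈ Δ ∧ s.val0 = t.val0) ∨
      (PForm.ne s t ∈ Δ ∧ s.val0 ≠ t.val0)) ∨
    (∃ s t : PTerm 0, PForm.nmem s ∈ Δ ∧ PForm.mem t ∈ Δ ∧ s.val0 = t.val0)

lemma Der.of_ax_subset {α ρ : Ordinal.{u}} {Δ Θ : Finset (PForm 0)}
    (hsub : ∀ B ∈ Δ, B ∈ Θ) (h : AxCond Δ) : Der α ρ Θ := by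
  apply Der.ax
  rcases h with ⟨s, t, ⟨h1, h2⟩ | ⟨h1, h2⟩⟩ | ⟨s, t, h1, h2, h3⟩
  · exact Or.inl ⟨s, t, Or.inl ⟨hsub _ h1, h2⟩⟩
  · exact Or.inl ⟨s, t, Or.inr ⟨hsub _ h1, h2⟩⟩
  · exact Or.inr ⟨s, t, hsub _ h1, hsub _ h2, h3⟩

lemma Der.ax_resolve {α ρ : Ordinal.{u}} {Δ Θ : Finset (PForm 0)} {c : PForm 0}
    (hc : ∀ B ∈ Δ, B = c ∨ B ∈ Θ)
    (hlit : ∀ u w : PTerm 0,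
      PForm.eq u w ≠ c ∧ PForm.ne u w ≠ c ∧ PForm.nmem u ≠ c ∧ PForm.mem u ≠ c)
    (h : AxCond Δ) : Der α ρ Θ := by
  apply Der.ax
  rcases h with ⟨u, w, ⟨h1, h2⟩ | ⟨h1, h2⟩⟩ | ⟨u, w, h1, h2, h3⟩
  · exact Or.inl ⟨u, w, Or.inl ⟨(hc _ h1).resolve_left (hlit u w).1, h2⟩⟩
  · exact Or.inl ⟨u, w, Or.inr ⟨(hc _ h1).resolve_left (hlit u w).2.1, h2⟩⟩
  · exact Or.inr ⟨u, w, (hc _ h1).resolve_left (hlit u w).2.2.1,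
      (hc _ h2).resolve_left (hlit w u).2.2.2, h3⟩

/-- Weakening / monotonicity. -/
lemma Der.mono {α ρ : Ordinal.{u}} {Δ : Finset (PForm 0)} (D : Der α ρ Δ) :
    ∀ {α' : Ordinal.{u}} {Θ : Finset (PForm 0)}, α ≤ α' → (∀ B ∈ Δ, B ∈ Θ) → Der α' ρ Θ := by
  induction D with
  | ax h => exact fun hα hsub => Der.of_ax_subset hsub h
  | @and α α₁ α₂ ρ Δ A₁ A₂ E₁ E₂ h₁ h₂ ih₁ ih₂ =>
    intro α' Θ hα hsub
    have hP : PForm.and A₁ A₂ ∈ Θ := hsub _ (Finset.mem_insert_self _ _)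
    have hΔ : ∀ B ∈ Δ, B ∈ Θ := fun B hB => hsub _ (Finset.mem_insert_of_mem hB)
    rw [← Finset.insert_eq_self.mpr hP]
    exact Der.and (ih₁ le_rfl (mem_step hΔ)) (ih₂ le_rfl (mem_step hΔ))
      (h₁.trans_le hα) (h₂.trans_le hα)
  | @orl α α₀ ρ Δ A₁ A₂ E h ih =>
    intro α' Θ hα hsub
    have hP : PForm.or A₁ A₂ ∈ Θ := hsub _ (Finset.mem_insert_self _ _)
    have hΔ : ∀ B ∈ Δ, B ∈ Θ := fun B hB => hsub _ (Finset.mem_insert_of_mem hB)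
    rw [← Finset.insert_eq_self.mpr hP]
    exact Der.orl (ih le_rfl (mem_step hΔ)) (h.trans_le hα)
  | @orr α α₀ ρ Δ A₁ A₂ E h ih =>
    intro α' Θ hα hsub
    have hP : PForm.or A₁ A₂ ∈ Θ := hsub _ (Finset.mem_insert_self _ _)
    have hΔ : ∀ B ∈ Δ, B ∈ Θ := fun B hB => hsub _ (Finset.mem_insert_of_mem hB)
    rw [← Finset.insert_eq_self.mpr hP]
    exact Der.orr (ih le_rfl (mem_step hΔ)) (h.trans_le hα)
  | @all α ρ Δ A γ hγ E ih =>
    intro α' Θ hα hsub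
    have hP : PForm.all A ∈ Θ := hsub _ (Finset.mem_insert_self _ _)
    have hΔ : ∀ B ∈ Δ, B ∈ Θ := fun B hB => hsub _ (Finset.mem_insert_of_mem hB)
    rw [← Finset.insert_eq_self.mpr hP]
    exact Der.all γ (fun k => (hγ k).trans_le hα) (fun k => ih k le_rfl (mem_step hΔ))
  | @ex α α₀ ρ Δ A k E h ih =>
    intro α' Θ hα hsub
    have hP : PForm.ex A ∈ Θ := hsub _ (Finset.mem_insert_self _ _)
    have hΔ : ∀ B ∈ Δ, B ∈ Θ := fun B hB => hsub _ (Finset.mem_insert_of_mem hB)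
    rw [← Finset.insert_eq_self.mpr hP]
    exact Der.ex k (ih le_rfl (mem_step hΔ)) (h.trans_le hα)
  | @cut α α₁ α₂ ρ Δ F E₁ E₂ h₁ h₂ hrk ih₁ ih₂ =>
    intro α' Θ hα hsub
    exact Der.cut (ih₁ le_rfl (mem_step hsub)) (ih₂ le_rfl (mem_step hsub))
      (h₁.trans_le hα) (h₂.trans_le hα) hrk

/-- Generic elimination of a formula that is never principal in a logical rule. -/
lemma Der.litElim {ρ : Ordinal.{u}} (c : PForm 0) (G : Finset (PForm 0) → Prop)
    (hG : ∀ (Q : PForm 0) (Θ : Finset (PForm 0)), G Θ → G (insert Q Θ))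
    (hand : ∀ A B : PForm 0, PForm.and A B ≠ c)
    (hor : ∀ A B : PForm 0, PForm.or A B ≠ c)
    (hall : ∀ A : PForm 1, PForm.all A ≠ c)
    (hex : ∀ A : PForm 1, PForm.ex A ≠ c)
    (hax : ∀ {Δ Θ : Finset (PForm 0)} {α : Ordinal.{u}},
      (∀ B ∈ Δ, B = c ∨ B ∈ Θ) → G Θ → AxCond Δ → Der α ρ Θ) :
    ∀ {α ρ'' : Ordinal.{u}} {Δ : Finset (PForm 0)}, Der α ρ'' Δ → ρ'' = ρ →
      ∀ {Θ : Finset (PForm 0)}, (∀ B ∈ Δ, B = c ∨ B ∈ Θ) → G Θ → Der α ρ Θ := by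
  intro α ρ'' Δ D
  induction D with
  | ax h =>
    intro hEq Θ hsub hGΘ
    exact hax hsub hGΘ h
  | @and α α₁ α₂ ρ' Δ A₁ A₂ E₁ E₂ h₁ h₂ ih₁ ih₂ =>
    intro hEq Θ hsub hGΘ
    subst hEq
    have hP : PForm.and A₁ A₂ ∈ Θ :=
      (hsub _ (Finset.mem_insert_self _ _)).resolve_left (hand A₁ A₂)
    rw [← Finset.insert_eq_self.mpr hP]
    exact Der.and (ih₁ rfl (cond_step (cond_tail hsub)) (hG _ _ hGΘ))
      (ih₂ rfl (cond_step (cond_tail hsub)) (hG _ _ hGΘ)) h₁ h₂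
  | @orl α α₀ ρ' Δ A₁ A₂ E h ih =>
    intro hEq Θ hsub hGΘ
    subst hEq
    have hP : PForm.or A₁ A₂ ∈ Θ :=
      (hsub _ (Finset.mem_insert_self _ _)).resolve_left (hor A₁ A₂)
    rw [← Finset.insert_eq_self.mpr hP]
    exact Der.orl (ih rfl (cond_step (cond_tail hsub)) (hG _ _ hGΘ)) h
  | @orr α α₀ ρ' Δ A₁ A₂ E h ih =>
    intro hEq Θ hsub hGΘ
    subst hEq
    have hP : PForm.or A₁ A₂ ∈ Θ :=
      (hsub _ (Finset.mem_insert_self _ _)).resolve_left (hor A₁ A₂)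
    rw [← Finset.insert_eq_self.mpr hP]
    exact Der.orr (ih rfl (cond_step (cond_tail hsub)) (hG _ _ hGΘ)) h
  | @all α ρ' Δ A γ hγ E ih =>
    intro hEq Θ hsub hGΘ
    subst hEq
    have hP : PForm.all A ∈ Θ :=
      (hsub _ (Finset.mem_insert_self _ _)).resolve_left (hall A)
    rw [← Finset.insert_eq_self.mpr hP]
    exact Der.all γ hγ (fun k => ih k rfl (cond_step (cond_tail hsub)) (hG _ _ hGΘ))
  | @ex α α₀ ρ' Δ A k E h ih =>
    intro hEq Θ hsub hGΘ
    subst hEq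
    have hP : PForm.ex A ∈ Θ :=
      (hsub _ (Finset.mem_insert_self _ _)).resolve_left (hex A)
    rw [← Finset.insert_eq_self.mpr hP]
    exact Der.ex k (ih rfl (cond_step (cond_tail hsub)) (hG _ _ hGΘ)) h
  | @cut α α₁ α₂ ρ' Δ F E₁ E₂ h₁ h₂ hrk ih₁ ih₂ =>
    intro hEq Θ hsub hGΘ
    subst hEq
    exact Der.cut (ih₁ rfl (cond_step hsub) (hG _ _ hGΘ)) (ih₂ rfl (cond_step hsub) (hG _ _ hGΘ))
      h₁ h₂ hrk

/-- Elimination of a false equation. -/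
lemma Der.elim_eq {ρ : Ordinal.{u}} {s t : PTerm 0} (hval : s.val0 ≠ t.val0)
    {α : Ordinal.{u}} {Δ Θ : Finset (PForm 0)} (D : Der α ρ Δ)
    (hsub : ∀ B ∈ Δ, B = PForm.eq s t ∨ B ∈ Θ) : Der α ρ Θ := by
  refine Der.litElim _ (fun _ => True) (fun _ _ _ => trivial)
    (fun _ _ => by simp) (fun _ _ => by simp) (fun _ => by simp) (fun _ => by simp)
    ?_ D rfl hsub trivial
  intro Δ' Θ' α' hsub' _ h
  apply Der.ax
  rcases h with ⟨u, w, ⟨h1, h2⟩ | ⟨h1, h2⟩⟩ | ⟨u, w, h1, h2, h3⟩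
  · rcases hsub' _ h1 with h | hΘ
    · injection h with _ e₁ e₂
      subst e₁; subst e₂
      exact absurd h2 hval
    · exact Or.inl ⟨u, w, Or.inl ⟨hΘ, h2⟩⟩
  · exact Or.inl ⟨u, w, Or.inr ⟨(hsub' _ h1).resolve_left (by simp), h2⟩⟩
  · exact Or.inr ⟨u, w, (hsub' _ h1).resolve_left (by simp),
      (hsub' _ h2).resolve_left (by simp), h3⟩

/-- Elimination of a false inequation. -/
lemma Der.elim_ne {ρ : Ordinal.{u}} {s t : PTerm 0} (hval : s.val0 = t.val0)
    {α : Ordinal.{u}} {Δ Θ : Finset (PForm 0)} (D : Der α ρ Δ)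
    (hsub : ∀ B ∈ Δ, B = PForm.ne s t ∨ B ∈ Θ) : Der α ρ Θ := by
  refine Der.litElim _ (fun _ => True) (fun _ _ _ => trivial)
    (fun _ _ => by simp) (fun _ _ => by simp) (fun _ => by simp) (fun _ => by simp)
    ?_ D rfl hsub trivial
  intro Δ' Θ' α' hsub' _ h
  apply Der.ax
  rcases h with ⟨u, w, ⟨h1, h2⟩ | ⟨h1, h2⟩⟩ | ⟨u, w, h1, h2, h3⟩
  · exact Or.inl ⟨u, w, Or.inl ⟨(hsub' _ h1).resolve_left (by simp), h2⟩⟩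
  · rcases hsub' _ h1 with h | hΘ
    · injection h with _ e₁ e₂
      subst e₁; subst e₂
      exact absurd hval h2
    · exact Or.inl ⟨u, w, Or.inr ⟨hΘ, h2⟩⟩
  · exact Or.inr ⟨u, w, (hsub' _ h1).resolve_left (by simp),
      (hsub' _ h2).resolve_left (by simp), h3⟩

/-- Replacing `mem t` by `mem s` for terms of equal value. -/
lemma Der.mem_repl {ρ : Ordinal.{u}} {s t : PTerm 0} (hval : s.val0 = t.val0)
    {α : Ordinal.{u}} {Δ Θ : Finset (PForm 0)} (D : Der α ρ Δ)
    (hsub : ∀ B ∈ Δ, B = PForm.mem t ∨ B ∈ Θ) (hs : PForm.mem s ∈ Θ) : Der α ρ Θ := by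
  refine Der.litElim _ (fun Θ => PForm.mem s ∈ Θ)
    (fun _ _ h => Finset.mem_insert_of_mem h)
    (fun _ _ => by simp) (fun _ _ => by simp) (fun _ => by simp) (fun _ => by simp)
    ?_ D rfl hsub hs
  intro Δ' Θ' α' hsub' hs' h
  apply Der.ax
  rcases h with ⟨u, w, ⟨h1, h2⟩ | ⟨h1, h2⟩⟩ | ⟨u, w, h1, h2, h3⟩
  · exact Or.inl ⟨u, w, Or.inl ⟨(hsub' _ h1).resolve_left (by simp), h2⟩⟩
  · exact Or.inl ⟨u, w, Or.inr ⟨(hsub' _ h1).resolve_left (by simp), h2⟩⟩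
  · have hu : PForm.nmem u ∈ Θ' := (hsub' _ h1).resolve_left (by simp)
    rcases hsub' _ h2 with h | hw
    · injection h with _ e
      subst e
      exact Or.inr ⟨u, s, hu, hs', h3.trans hval.symm⟩
    · exact Or.inr ⟨u, w, hu, hw, h3⟩

/-- Inversion of the `∧`-rule. -/
lemma Der.inv_and {ρ : Ordinal.{u}} {A₁ A₂ C : PForm 0} (hC : C = A₁ ∨ C = A₂) :
    ∀ {α : Ordinal.{u}} {Δ : Finset (PForm 0)}, Der α ρ Δ →
      ∀ {Θ : Finset (PForm 0)}, (∀ B ∈ Δ, B = PForm.and A₁ A₂ ∨ B ∈ Θ) → C ∈ Θ →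
      Der α ρ Θ := by
  intro α Δ D
  induction D with
  | ax h =>
    intro Θ hsub hC
    exact Der.ax_resolve hsub (fun _ _ => by refine ⟨?_,?_,?_,?_⟩ <;> simp) h
  | @and α α₁ α₂ ρ' Δ B₁ B₂ E₁ E₂ h₁ h₂ ih₁ ih₂ =>
    intro Θ hsub hCΘ
    by_cases hP : PForm.and B₁ B₂ = PForm.and A₁ A₂
    · injection hP with _ e₁ e₂
      subst e₁; subst e₂
      rcases hC with rfl | rfl
      · exact (ih₁ (cond_absorb (cond_tail hsub) hCΘ) hCΘ).mono h₁.le (fun B hB => hB)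
      · exact (ih₂ (cond_absorb (cond_tail hsub) hCΘ) hCΘ).mono h₂.le (fun B hB => hB)
    · have hPΘ : PForm.and B₁ B₂ ∈ Θ := (hsub _ (Finset.mem_insert_self _ _)).resolve_left hP
      rw [← Finset.insert_eq_self.mpr hPΘ]
      exact Der.and (ih₁ (cond_step (cond_tail hsub)) (Finset.mem_insert_of_mem hCΘ))
        (ih₂ (cond_step (cond_tail hsub)) (Finset.mem_insert_of_mem hCΘ)) h₁ h₂
  | @orl α α₀ ρ' Δ B₁ B₂ E h ih =>
    intro Θ hsub hCΘ
    have hPΘ : PForm.or B₁ B₂ ∈ Θ :=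
      (hsub _ (Finset.mem_insert_self _ _)).resolve_left (by simp)
    rw [← Finset.insert_eq_self.mpr hPΘ]
    exact Der.orl (ih (cond_step (cond_tail hsub)) (Finset.mem_insert_of_mem hCΘ)) h
  | @orr α α₀ ρ' Δ B₁ B₂ E h ih =>
    intro Θ hsub hCΘ
    have hPΘ : PForm.or B₁ B₂ ∈ Θ :=
      (hsub _ (Finset.mem_insert_self _ _)).resolve_left (by simp)
    rw [← Finset.insert_eq_self.mpr hPΘ]
    exact Der.orr (ih (cond_step (cond_tail hsub)) (Finset.mem_insert_of_mem hCΘ)) h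
  | @all α ρ' Δ B γ hγ E ih =>
    intro Θ hsub hCΘ
    have hPΘ : PForm.all B ∈ Θ :=
      (hsub _ (Finset.mem_insert_self _ _)).resolve_left (by simp)
    rw [← Finset.insert_eq_self.mpr hPΘ]
    exact Der.all γ hγ
      (fun k => ih k (cond_step (cond_tail hsub)) (Finset.mem_insert_of_mem hCΘ))
  | @ex α α₀ ρ' Δ B k E h ih =>
    intro Θ hsub hCΘ
    have hPΘ : PForm.ex B ∈ Θ :=
      (hsub _ (Finset.mem_insert_self _ _)).resolve_left (by simp)
    rw [← Finset.insert_eq_self.mpr hPΘ]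
    exact Der.ex k (ih (cond_step (cond_tail hsub)) (Finset.mem_insert_of_mem hCΘ)) h
  | @cut α α₁ α₂ ρ' Δ F E₁ E₂ h₁ h₂ hrk ih₁ ih₂ =>
    intro Θ hsub hCΘ
    exact Der.cut (ih₁ (cond_step hsub) (Finset.mem_insert_of_mem hCΘ))
      (ih₂ (cond_step hsub) (Finset.mem_insert_of_mem hCΘ)) h₁ h₂ hrk

/-- Inversion of the `∀`-rule. -/
lemma Der.inv_all {ρ : Ordinal.{u}} {A : PForm 1} (k : ℕ) :
    ∀ {α : Ordinal.{u}} {Δ : Finset (PForm 0)}, Der α ρ Δ →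
      ∀ {Θ : Finset (PForm 0)}, (∀ B ∈ Δ, B = PForm.all A ∨ B ∈ Θ) → A.inst k ∈ Θ →
      Der α ρ Θ := by
  intro α Δ D
  induction D with
  | ax h =>
    intro Θ hsub hC
    exact Der.ax_resolve hsub (fun _ _ => by refine ⟨?_,?_,?_,?_⟩ <;> simp) h
  | @and α α₁ α₂ ρ' Δ B₁ B₂ E₁ E₂ h₁ h₂ ih₁ ih₂ =>
    intro Θ hsub hCΘ
    have hPΘ : PForm.and B₁ B₂ ∈ Θ :=
      (hsub _ (Finset.mem_insert_self _ _)).resolve_left (by simp)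
    rw [← Finset.insert_eq_self.mpr hPΘ]
    exact Der.and (ih₁ (cond_step (cond_tail hsub)) (Finset.mem_insert_of_mem hCΘ))
      (ih₂ (cond_step (cond_tail hsub)) (Finset.mem_insert_of_mem hCΘ)) h₁ h₂
  | @orl α α₀ ρ' Δ B₁ B₂ E h ih =>
    intro Θ hsub hCΘ
    have hPΘ : PForm.or B₁ B₂ ∈ Θ :=
      (hsub _ (Finset.mem_insert_self _ _)).resolve_left (by simp)
    rw [← Finset.insert_eq_self.mpr hPΘ]
    exact Der.orl (ih (cond_step (cond_tail hsub)) (Finset.mem_insert_of_mem hCΘ)) h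
  | @orr α α₀ ρ' Δ B₁ B₂ E h ih =>
    intro Θ hsub hCΘ
    have hPΘ : PForm.or B₁ B₂ ∈ Θ :=
      (hsub _ (Finset.mem_insert_self _ _)).resolve_left (by simp)
    rw [← Finset.insert_eq_self.mpr hPΘ]
    exact Der.orr (ih (cond_step (cond_tail hsub)) (Finset.mem_insert_of_mem hCΘ)) h
  | @all α ρ' Δ B γ hγ E ih =>
    intro Θ hsub hCΘ
    by_cases hP : PForm.all B = PForm.all A
    · injection hP with _ e
      subst e
      exact (ih k (cond_absorb (cond_tail hsub) hCΘ) hCΘ).mono (hγ k).le (fun B hB => hB)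
    · have hPΘ : PForm.all B ∈ Θ := (hsub _ (Finset.mem_insert_self _ _)).resolve_left hP
      rw [← Finset.insert_eq_self.mpr hPΘ]
      exact Der.all γ hγ
        (fun j => ih j (cond_step (cond_tail hsub)) (Finset.mem_insert_of_mem hCΘ))
  | @ex α α₀ ρ' Δ B j E h ih =>
    intro Θ hsub hCΘ
    have hPΘ : PForm.ex B ∈ Θ :=
      (hsub _ (Finset.mem_insert_self _ _)).resolve_left (by simp)
    rw [← Finset.insert_eq_self.mpr hPΘ]
    exact Der.ex j (ih (cond_step (cond_tail hsub)) (Finset.mem_insert_of_mem hCΘ)) h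
  | @cut α α₁ α₂ ρ' Δ F E₁ E₂ h₁ h₂ hrk ih₁ ih₂ =>
    intro Θ hsub hCΘ
    exact Der.cut (ih₁ (cond_step hsub) (Finset.mem_insert_of_mem hCΘ))
      (ih₂ (cond_step hsub) (Finset.mem_insert_of_mem hCΘ)) h₁ h₂ hrk

lemma lt_add_of_pos {β α : Ordinal.{u}} (h : 0 < α) : β < β + α := by
  simpa using (add_lt_add_iff_left β).mpr h

/-- Reduction for a `∨`-cut. -/
lemma Der.reduce_or {ρ β : Ordinal.{u}} {Γ : Finset (PForm 0)} {A₁ A₂ : PForm 0}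
    (hρ₁ : (A₁.rk : Ordinal) < ρ) (hρ₂ : (A₂.rk : Ordinal) < ρ)
    (D₂ : Der β ρ Γ) :
    ∀ {α ρ'' : Ordinal.{u}} {Δ : Finset (PForm 0)}, Der α ρ'' Δ → ρ'' = ρ →
      ∀ {Θ : Finset (PForm 0)},
      (∀ B ∈ Δ, B = PForm.or A₁ A₂ ∨ B ∈ Θ) →
      (∀ B ∈ Γ, B = PForm.and A₁.neg A₂.neg ∨ B ∈ Θ) →
      Der (β + α) ρ Θ := by
  intro α ρ'' Δ D
  induction D with
  | ax h =>
    intro hEq Θ hsub hΓ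
    exact Der.ax_resolve hsub (fun _ _ => by refine ⟨?_,?_,?_,?_⟩ <;> simp) h
  | @and α α₁ α₂ ρ' Δ B₁ B₂ E₁ E₂ h₁ h₂ ih₁ ih₂ =>
    intro hEq Θ hsub hΓ
    subst hEq
    have hPΘ : PForm.and B₁ B₂ ∈ Θ :=
      (hsub _ (Finset.mem_insert_self _ _)).resolve_left (by simp)
    rw [← Finset.insert_eq_self.mpr hPΘ]
    exact Der.and (ih₁ rfl (cond_step (cond_tail hsub)) (cond_weak hΓ))
      (ih₂ rfl (cond_step (cond_tail hsub)) (cond_weak hΓ))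
      ((add_lt_add_iff_left β).mpr h₁) ((add_lt_add_iff_left β).mpr h₂)
  | @orl α α₀ ρ' Δ B₁ B₂ E h ih =>
    intro hEq Θ hsub hΓ
    subst hEq
    by_cases hP : PForm.or B₁ B₂ = PForm.or A₁ A₂
    · injection hP with _ e₁ e₂
      subst e₁; subst e₂
      exact Der.cut (ih rfl (cond_step (cond_tail hsub)) (cond_weak hΓ))
        (Der.inv_and (Or.inl rfl) D₂ (cond_weak hΓ) (Finset.mem_insert_self _ _))
        ((add_lt_add_iff_left β).mpr h)
        (lt_add_of_pos ((zero_le (a := α₀)).trans_lt h)) hρ₁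
    · have hPΘ : PForm.or B₁ B₂ ∈ Θ := (hsub _ (Finset.mem_insert_self _ _)).resolve_left hP
      rw [← Finset.insert_eq_self.mpr hPΘ]
      exact Der.orl (ih rfl (cond_step (cond_tail hsub)) (cond_weak hΓ))
        ((add_lt_add_iff_left β).mpr h)
  | @orr α α₀ ρ' Δ B₁ B₂ E h ih =>
    intro hEq Θ hsub hΓ
    subst hEq
    by_cases hP : PForm.or B₁ B₂ = PForm.or A₁ A₂
    · injection hP with _ e₁ e₂
      subst e₁; subst e₂
      exact Der.cut (ih rfl (cond_step (cond_tail hsub)) (cond_weak hΓ))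
        (Der.inv_and (Or.inr rfl) D₂ (cond_weak hΓ) (Finset.mem_insert_self _ _))
        ((add_lt_add_iff_left β).mpr h)
        (lt_add_of_pos ((zero_le (a := α₀)).trans_lt h)) hρ₂
    · have hPΘ : PForm.or B₁ B₂ ∈ Θ := (hsub _ (Finset.mem_insert_self _ _)).resolve_left hP
      rw [← Finset.insert_eq_self.mpr hPΘ]
      exact Der.orr (ih rfl (cond_step (cond_tail hsub)) (cond_weak hΓ))
        ((add_lt_add_iff_left β).mpr h)
  | @all α ρ' Δ B γ hγ E ih =>
    intro hEq Θ hsub hΓ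
    subst hEq
    have hPΘ : PForm.all B ∈ Θ :=
      (hsub _ (Finset.mem_insert_self _ _)).resolve_left (by simp)
    rw [← Finset.insert_eq_self.mpr hPΘ]
    exact Der.all (fun k => β + γ k) (fun k => (add_lt_add_iff_left β).mpr (hγ k))
      (fun k => ih k rfl (cond_step (cond_tail hsub)) (cond_weak hΓ))
  | @ex α α₀ ρ' Δ B k E h ih =>
    intro hEq Θ hsub hΓ
    subst hEq
    have hPΘ : PForm.ex B ∈ Θ :=
      (hsub _ (Finset.mem_insert_self _ _)).resolve_left (by simp)
    rw [← Finset.insert_eq_self.mpr hPΘ]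
    exact Der.ex k (ih rfl (cond_step (cond_tail hsub)) (cond_weak hΓ))
      ((add_lt_add_iff_left β).mpr h)
  | @cut α α₁ α₂ ρ' Δ F E₁ E₂ h₁ h₂ hrk ih₁ ih₂ =>
    intro hEq Θ hsub hΓ
    subst hEq
    exact Der.cut (ih₁ rfl (cond_step hsub) (cond_weak hΓ)) (ih₂ rfl (cond_step hsub) (cond_weak hΓ))
      ((add_lt_add_iff_left β).mpr h₁) ((add_lt_add_iff_left β).mpr h₂) hrk

/-- Reduction for an `∃`-cut. -/
lemma Der.reduce_ex {ρ β : Ordinal.{u}} {Γ : Finset (PForm 0)} {A : PForm 1}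
    (hρ : ∀ k : ℕ, (((A.inst k).rk : ℕ) : Ordinal) < ρ)
    (D₂ : Der β ρ Γ) :
    ∀ {α ρ'' : Ordinal.{u}} {Δ : Finset (PForm 0)}, Der α ρ'' Δ → ρ'' = ρ →
      ∀ {Θ : Finset (PForm 0)},
      (∀ B ∈ Δ, B = PForm.ex A ∨ B ∈ Θ) →
      (∀ B ∈ Γ, B = PForm.all A.neg ∨ B ∈ Θ) →
      Der (β + α) ρ Θ := by
  intro α ρ'' Δ D
  induction D with
  | ax h =>
    intro hEq Θ hsub hΓ
    exact Der.ax_resolve hsub (fun _ _ => by refine ⟨?_,?_,?_,?_⟩ <;> simp) h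
  | @and α α₁ α₂ ρ' Δ B₁ B₂ E₁ E₂ h₁ h₂ ih₁ ih₂ =>
    intro hEq Θ hsub hΓ
    subst hEq
    have hPΘ : PForm.and B₁ B₂ ∈ Θ :=
      (hsub _ (Finset.mem_insert_self _ _)).resolve_left (by simp)
    rw [← Finset.insert_eq_self.mpr hPΘ]
    exact Der.and (ih₁ rfl (cond_step (cond_tail hsub)) (cond_weak hΓ))
      (ih₂ rfl (cond_step (cond_tail hsub)) (cond_weak hΓ))
      ((add_lt_add_iff_left β).mpr h₁) ((add_lt_add_iff_left β).mpr h₂)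
  | @orl α α₀ ρ' Δ B₁ B₂ E h ih =>
    intro hEq Θ hsub hΓ
    subst hEq
    have hPΘ : PForm.or B₁ B₂ ∈ Θ :=
      (hsub _ (Finset.mem_insert_self _ _)).resolve_left (by simp)
    rw [← Finset.insert_eq_self.mpr hPΘ]
    exact Der.orl (ih rfl (cond_step (cond_tail hsub)) (cond_weak hΓ))
      ((add_lt_add_iff_left β).mpr h)
  | @orr α α₀ ρ' Δ B₁ B₂ E h ih =>
    intro hEq Θ hsub hΓ
    subst hEq
    have hPΘ : PForm.or B₁ B₂ ∈ Θ :=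
      (hsub _ (Finset.mem_insert_self _ _)).resolve_left (by simp)
    rw [← Finset.insert_eq_self.mpr hPΘ]
    exact Der.orr (ih rfl (cond_step (cond_tail hsub)) (cond_weak hΓ))
      ((add_lt_add_iff_left β).mpr h)
  | @all α ρ' Δ B γ hγ E ih =>
    intro hEq Θ hsub hΓ
    subst hEq
    have hPΘ : PForm.all B ∈ Θ :=
      (hsub _ (Finset.mem_insert_self _ _)).resolve_left (by simp)
    rw [← Finset.insert_eq_self.mpr hPΘ]
    exact Der.all (fun k => β + γ k) (fun k => (add_lt_add_iff_left β).mpr (hγ k))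
      (fun k => ih k rfl (cond_step (cond_tail hsub)) (cond_weak hΓ))
  | @ex α α₀ ρ' Δ B k E h ih =>
    intro hEq Θ hsub hΓ
    subst hEq
    by_cases hP : PForm.ex B = PForm.ex A
    · injection hP with _ e
      subst e
      refine Der.cut (ih rfl (cond_step (cond_tail hsub)) (cond_weak hΓ)) ?_
        ((add_lt_add_iff_left β).mpr h)
        (lt_add_of_pos ((zero_le (a := α₀)).trans_lt h)) (hρ k)
      rw [PForm.neg_inst]
      exact Der.inv_all k D₂ (cond_weak hΓ) (Finset.mem_insert_self _ _)
    · have hPΘ : PForm.ex B ∈ Θ := (hsub _ (Finset.mem_insert_self _ _)).resolve_left hP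
      rw [← Finset.insert_eq_self.mpr hPΘ]
      exact Der.ex k (ih rfl (cond_step (cond_tail hsub)) (cond_weak hΓ))
        ((add_lt_add_iff_left β).mpr h)
  | @cut α α₁ α₂ ρ' Δ F E₁ E₂ h₁ h₂ hrk ih₁ ih₂ =>
    intro hEq Θ hsub hΓ
    subst hEq
    exact Der.cut (ih₁ rfl (cond_step hsub) (cond_weak hΓ)) (ih₂ rfl (cond_step hsub) (cond_weak hΓ))
      ((add_lt_add_iff_left β).mpr h₁) ((add_lt_add_iff_left β).mpr h₂) hrk

/-- Reduction for a `mem`-cut. -/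
lemma Der.reduce_mem {ρ α : Ordinal.{u}} {Δ : Finset (PForm 0)} {t : PTerm 0}
    (D₁ : Der α ρ Δ) :
    ∀ {β ρ'' : Ordinal.{u}} {Γ : Finset (PForm 0)}, Der β ρ'' Γ → ρ'' = ρ →
      ∀ {Θ : Finset (PForm 0)},
      (∀ B ∈ Δ, B = PForm.mem t ∨ B ∈ Θ) →
      (∀ B ∈ Γ, B = PForm.nmem t ∨ B ∈ Θ) →
      Der (α + β) ρ Θ := by
  intro β ρ'' Γ E
  induction E with
  | ax h =>
    intro hEq Θ hΔ hΓ
    subst hEq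
    rcases h with ⟨u, w, ⟨h1, h2⟩ | ⟨h1, h2⟩⟩ | ⟨u, w, h1, h2, h3⟩
    · exact Der.ax (Or.inl ⟨u, w, Or.inl ⟨(hΓ _ h1).resolve_left (by simp), h2⟩⟩)
    · exact Der.ax (Or.inl ⟨u, w, Or.inr ⟨(hΓ _ h1).resolve_left (by simp), h2⟩⟩)
    · have hw : PForm.mem w ∈ Θ := (hΓ _ h2).resolve_left (by simp)
      rcases hΓ _ h1 with h | hu
      · injection h with _ e
        subst e
        exact (Der.mem_repl h3.symm D₁ hΔ hw).mono le_self_add (fun B hB => hB)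
      · exact Der.ax (Or.inr ⟨u, w, hu, hw, h3⟩)
  | @and β' β₁ β₂ ρ' Γ B₁ B₂ E₁ E₂ h₁ h₂ ih₁ ih₂ =>
    intro hEq Θ hΔ hΓ
    subst hEq
    have hPΘ : PForm.and B₁ B₂ ∈ Θ :=
      (hΓ _ (Finset.mem_insert_self _ _)).resolve_left (by simp)
    rw [← Finset.insert_eq_self.mpr hPΘ]
    exact Der.and (ih₁ rfl (cond_weak hΔ) (cond_step (cond_tail hΓ)))
      (ih₂ rfl (cond_weak hΔ) (cond_step (cond_tail hΓ)))
      ((add_lt_add_iff_left α).mpr h₁) ((add_lt_add_iff_left α).mpr h₂)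
  | @orl β' β₀ ρ' Γ B₁ B₂ E h ih =>
    intro hEq Θ hΔ hΓ
    subst hEq
    have hPΘ : PForm.or B₁ B₂ ∈ Θ :=
      (hΓ _ (Finset.mem_insert_self _ _)).resolve_left (by simp)
    rw [← Finset.insert_eq_self.mpr hPΘ]
    exact Der.orl (ih rfl (cond_weak hΔ) (cond_step (cond_tail hΓ)))
      ((add_lt_add_iff_left α).mpr h)
  | @orr β' β₀ ρ' Γ B₁ B₂ E h ih =>
    intro hEq Θ hΔ hΓ
    subst hEq
    have hPΘ : PForm.or B₁ B₂ ∈ Θ :=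
      (hΓ _ (Finset.mem_insert_self _ _)).resolve_left (by simp)
    rw [← Finset.insert_eq_self.mpr hPΘ]
    exact Der.orr (ih rfl (cond_weak hΔ) (cond_step (cond_tail hΓ)))
      ((add_lt_add_iff_left α).mpr h)
  | @all β' ρ' Γ B γ hγ E ih =>
    intro hEq Θ hΔ hΓ
    subst hEq
    have hPΘ : PForm.all B ∈ Θ :=
      (hΓ _ (Finset.mem_insert_self _ _)).resolve_left (by simp)
    rw [← Finset.insert_eq_self.mpr hPΘ]
    exact Der.all (fun k => α + γ k) (fun k => (add_lt_add_iff_left α).mpr (hγ k))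
      (fun k => ih k rfl (cond_weak hΔ) (cond_step (cond_tail hΓ)))
  | @ex β' β₀ ρ' Γ B k E h ih =>
    intro hEq Θ hΔ hΓ
    subst hEq
    have hPΘ : PForm.ex B ∈ Θ :=
      (hΓ _ (Finset.mem_insert_self _ _)).resolve_left (by simp)
    rw [← Finset.insert_eq_self.mpr hPΘ]
    exact Der.ex k (ih rfl (cond_weak hΔ) (cond_step (cond_tail hΓ)))
      ((add_lt_add_iff_left α).mpr h)
  | @cut β' β₁ β₂ ρ' Γ F E₁ E₂ h₁ h₂ hrk ih₁ ih₂ =>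
    intro hEq Θ hΔ hΓ
    subst hEq
    exact Der.cut (ih₁ rfl (cond_weak hΔ) (cond_step hΓ)) (ih₂ rfl (cond_weak hΔ) (cond_step hΓ))
      ((add_lt_add_iff_left α).mpr h₁) ((add_lt_add_iff_left α).mpr h₂) hrk

/-- cut elimination, Theorem 4.10; Pohlers, Theorem 2.1.2.9.
For all ordinals `α`, `ρ` and every finite set `Δ` of closed pseudo-Π¹₁ formulas:
if `⊢^α_{ρ+1} Δ`, then `⊢^{ω^α}_ρ Δ`. -/
theorem cut_elimination (α ρ : Ordinal) (Δ : Finset (PForm 0)) (h : Der α (ρ + 1) Δ) :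
    Der (omega0 ^ α) ρ Δ := by
  have wlt : ∀ {a b : Ordinal}, a < b → omega0 ^ a < omega0 ^ b := fun h =>
    (Ordinal.opow_lt_opow_iff_right Ordinal.one_lt_omega0).mpr h
  have key : ∀ {α ρ' : Ordinal} {Δ : Finset (PForm 0)}, Der α ρ' Δ →
      ∀ ρ : Ordinal, ρ' = ρ + 1 → Der (omega0 ^ α) ρ Δ := by
    intro α ρ' Δ h
    induction h with
    | ax h => exact fun ρ _ => Der.ax h
    | @and α' α₁ α₂ σ Δ' A₁ A₂ E₁ E₂ h₁ h₂ ih₁ ih₂ =>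
      intro ρ hEq
      exact Der.and (ih₁ ρ hEq) (ih₂ ρ hEq) (wlt h₁) (wlt h₂)
    | @orl α' α₀ σ Δ' A₁ A₂ E h ih =>
      intro ρ hEq
      exact Der.orl (ih ρ hEq) (wlt h)
    | @orr α' α₀ σ Δ' A₁ A₂ E h ih =>
      intro ρ hEq
      exact Der.orr (ih ρ hEq) (wlt h)
    | @all α' σ Δ' A γ hγ E ih =>
      intro ρ hEq
      exact Der.all (fun k => omega0 ^ γ k) (fun k => wlt (hγ k)) (fun k => ih k ρ hEq)
    | @ex α' α₀ σ Δ' A k E h ih =>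
      intro ρ hEq
      exact Der.ex k (ih ρ hEq) (wlt h)
    | @cut α' α₁ α₂ σ Δ' F E₁ E₂ h₁ h₂ hrk ih₁ ih₂ =>
      intro ρ hEq
      subst hEq
      have I₁ : Der (omega0 ^ α₁) ρ (insert F Δ') := ih₁ ρ rfl
      have I₂ : Der (omega0 ^ α₂) ρ (insert F.neg Δ') := ih₂ ρ rfl
      have hb : omega0 ^ α₂ + omega0 ^ α₁ < omega0 ^ α' :=
        Ordinal.principal_add_omega0_opow α' (wlt h₂) (wlt h₁)
      have hb' : omega0 ^ α₁ + omega0 ^ α₂ < omega0 ^ α' :=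
        Ordinal.principal_add_omega0_opow α' (wlt h₁) (wlt h₂)
      have hrk' : (F.rk : Ordinal) ≤ ρ := by
        rwa [Ordinal.add_one_eq_succ, Order.lt_succ_iff] at hrk
      rcases lt_or_eq_of_le hrk' with hlt | heqρ
      · exact Der.cut I₁ I₂ (wlt h₁) (wlt h₂) hlt
      · cases F with
        | eq s t =>
          by_cases hv : s.val0 = t.val0
          · exact (Der.elim_ne hv I₂ cond_insert).mono (wlt h₂).le (fun B hB => hB)
          · exact (Der.elim_eq hv I₁ cond_insert).mono (wlt h₁).le (fun B hB => hB)
        | ne s t =>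
          by_cases hv : s.val0 = t.val0
          · exact (Der.elim_ne hv I₁ cond_insert).mono (wlt h₁).le (fun B hB => hB)
          · exact (Der.elim_eq hv I₂ cond_insert).mono (wlt h₂).le (fun B hB => hB)
        | mem s =>
          exact (Der.reduce_mem I₁ I₂ rfl cond_insert cond_insert).mono hb'.le (fun B hB => hB)
        | nmem s =>
          exact (Der.reduce_mem I₂ I₁ rfl cond_insert cond_insert).mono hb.le (fun B hB => hB)
        | or A₁ A₂ =>
          have r₁ : (A₁.rk : Ordinal) < ρ := by
            rw [← heqρ]
            exact_mod_cast (show A₁.rk < (PForm.or A₁ A₂).rk by simp [PForm.rk])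
          have r₂ : (A₂.rk : Ordinal) < ρ := by
            rw [← heqρ]
            exact_mod_cast (show A₂.rk < (PForm.or A₁ A₂).rk by simp [PForm.rk])
          exact (Der.reduce_or r₁ r₂ I₂ I₁ rfl cond_insert cond_insert).mono hb.le
            (fun B hB => hB)
        | and A₁ A₂ =>
          have r₁ : (A₁.neg.rk : Ordinal) < ρ := by
            rw [PForm.rk_neg, ← heqρ]
            exact_mod_cast (show A₁.rk < (PForm.and A₁ A₂).rk by simp [PForm.rk])
          have r₂ : (A₂.neg.rk : Ordinal) < ρ := by
            rw [PForm.rk_neg, ← heqρ]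
            exact_mod_cast (show A₂.rk < (PForm.and A₁ A₂).rk by simp [PForm.rk])
          have hcond : ∀ B ∈ insert (PForm.and A₁ A₂) Δ',
              B = PForm.and A₁.neg.neg A₂.neg.neg ∨ B ∈ Δ' := by
            simpa [PForm.neg_neg] using
              (cond_insert : ∀ B ∈ insert (PForm.and A₁ A₂) Δ', B = PForm.and A₁ A₂ ∨ B ∈ Δ')
          exact (Der.reduce_or r₁ r₂ I₁ I₂ rfl cond_insert hcond).mono hb'.le (fun B hB => hB)
        | ex A =>
          have rA : ∀ k : ℕ, (((A.inst k).rk : ℕ) : Ordinal) < ρ := by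
            intro k
            rw [PForm.rk_inst, ← heqρ]
            exact_mod_cast (show A.rk < (PForm.ex A).rk by simp [PForm.rk])
          exact (Der.reduce_ex rA I₂ I₁ rfl cond_insert cond_insert).mono hb.le (fun B hB => hB)
        | all A =>
          have rA : ∀ k : ℕ, (((A.neg.inst k).rk : ℕ) : Ordinal) < ρ := by
            intro k
            rw [PForm.rk_inst, PForm.rk_neg, ← heqρ]
            exact_mod_cast (show A.rk < (PForm.all A).rk by simp [PForm.rk])
          have hcond : ∀ B ∈ insert (PForm.all A) Δ',
              B = PForm.all A.neg.neg ∨ B ∈ Δ' := by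
            simpa [PForm.neg_neg] using
              (cond_insert : ∀ B ∈ insert (PForm.all A) Δ', B = PForm.all A ∨ B ∈ Δ')
          exact (Der.reduce_ex rA I₁ I₂ rfl cond_insert hcond).mono hb'.le (fun B hB => hB)
  exact key h ρ rfl
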